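/- For all integers k ≥ 2 and n ≥ 0, the number of Schröder paths from (0,0) to (n,n) all of whose lattice points (x,y) satisfy y − x ≤ k−2 equals |S_{n+1}(1243, 2143, 12…k)|, where 12…k denotes the identity permutation of length k. -/

import Mathlib

/-- `π` contains the pattern `σ`. -/
def PContains {k n : ℕ} (σ : Equiv.Perm (Fin k)) (π : Equiv.Perm (Fin n)) : Prop :=
  ∃ f : Fin k → Fin n, StrictMono f ∧ ∀ a b : Fin k, π (f a) < π (f b) ↔ σ a < σ b

/-- `π` avoids the pattern `σ`. -/
def PAvoids {k n : ℕ} (σ : Equiv.Perm (Fin k)) (π : Equiv.Perm (Fin n)) : Prop :=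
  ¬ PContains σ π

/-- The pattern 1243 (in one-line notation, 1-based). -/
def p1243 : Equiv.Perm (Fin 4) := ⟨![0, 1, 3, 2], ![0, 1, 3, 2], by decide, by decide⟩

/-- The pattern 2143 (in one-line notation, 1-based). -/
def p2143 : Equiv.Perm (Fin 4) := ⟨![1, 0, 3, 2], ![1, 0, 3, 2], by decide, by decide⟩

/-- `π` avoids both 1243 and 2143. -/
def AvoidsBoth {n : ℕ} (π : Equiv.Perm (Fin n)) : Prop :=
  PAvoids p1243 π ∧ PAvoids p2143 π

/-- `τ_k(π)`: the number of increasing subsequences of length `k` in `π`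
(with the convention `τ_0 = 0`). -/
noncomputable def tauPerm (k : ℕ) {n : ℕ} (π : Equiv.Perm (Fin n)) : ℕ :=
  if k = 0 then 0 else
    Nat.card {f : Fin k → Fin n // StrictMono f ∧ StrictMono (fun a => π (f a))}

/-- The number of occurrences (subsequences of type `σ`) of the pattern `σ` in `π`. -/
noncomputable def numOcc {k n : ℕ} (σ : Equiv.Perm (Fin k)) (π : Equiv.Perm (Fin n)) : ℕ :=
  Nat.card {f : Fin k → Fin n // StrictMono f ∧ ∀ a b : Fin k, π (f a) < π (f b) ↔ σ a < σ b}


/-- A step of a lattice path: north, east, or diagonal. -/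
inductive Step : Type where
  | N : Step
  | E : Step
  | D : Step
deriving DecidableEq

/-- A word over `{N, E, D}` is a Schröder path when it has equally many `N`s and `E`s
and every prefix has at least as many `N`s as `E`s. -/
def IsSchroder (w : List Step) : Prop :=
  w.count Step.N = w.count Step.E ∧
  ∀ p : List Step, p <+: w → p.count Step.E ≤ p.count Step.N

/-- Helper for `tauPath`: sum of `binom(ht(s), k-1)` over east and diagonal steps,
where `h` is the current height. -/
def tauAux (k : ℕ) : ℕ → List Step → ℕ
  | _, [] => 0
  | h, Step.N :: w => tauAux k (h + 1) w
  | h, Step.E :: w => Nat.choose h (k - 1) + tauAux k (h - 1) w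
  | h, Step.D :: w => Nat.choose h (k - 1) + tauAux k h w

/-- `τ_k` of a Schröder path: `binom(0,k-1) + Σ_s binom(ht(s),k-1)` over east and
diagonal steps `s`, with the convention `τ_0 = 0`. -/
def tauPath (k : ℕ) (w : List Step) : ℕ :=
  if k = 0 then 0 else Nat.choose 0 (k - 1) + tauAux k 0 w


section AuxProof
open List


/-- forbidden configuration common to 1243 and 2143 -/
def Bad4 (l : List ℕ) : Prop := ∃ a b c d : ℕ, [a,b,c,d] <+ l ∧ a < d ∧ b < d ∧ d < c

/-- has an increasing subsequence of length k -/
def IncK (k : ℕ) (l : List ℕ) : Prop := ∃ s : List ℕ, s <+ l ∧ s.length = k ∧ s.Pairwise (· < ·)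

def GoodL (k : ℕ) (l : List ℕ) : Prop := ¬ Bad4 l ∧ ¬ IncK k l

lemma Bad4.mono {l l' : List ℕ} (h : l <+ l') : Bad4 l → Bad4 l' := by
  rintro ⟨a,b,c,d,hs,h1,h2,h3⟩; exact ⟨a,b,c,d,hs.trans h,h1,h2,h3⟩

lemma IncK.mono {k : ℕ} {l l' : List ℕ} (h : l <+ l') : IncK k l → IncK k l' := by
  rintro ⟨s,hs,h1,h2⟩; exact ⟨s,hs.trans h,h1,h2⟩

lemma GoodL.mono {k : ℕ} {l l' : List ℕ} (h : l <+ l') : GoodL k l' → GoodL k l := by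
  rintro ⟨h1,h2⟩; exact ⟨fun b => h1 (b.mono h), fun b => h2 (b.mono h)⟩

/-- prepending an element larger than everything in `l` keeps goodness, for k ≥ 2 -/
lemma goodL_cons_max {k : ℕ} (hk : 2 ≤ k) {a : ℕ} {l : List ℕ} (ha : ∀ x ∈ l, x < a) :
    GoodL k (a :: l) ↔ GoodL k l := by
  constructor
  · exact fun h => h.mono (sublist_cons_self a l)
  · rintro ⟨h1,h2⟩
    constructor
    · rintro ⟨p,q,r,s,hs,hpq1,hpq2,hpq3⟩
      rcases (sublist_cons_iff).mp hs with hsub | ⟨t, ht, hsub⟩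
      · exact h1 ⟨p,q,r,s,hsub,hpq1,hpq2,hpq3⟩
      · -- p = a, [q,r,s] <+ l, but p < s means a < s, yet s ∈ l so s < a
        cases ht
        have hmem : s ∈ l := (hsub.subset) (by simp)
        exact absurd (lt_trans hpq1 (ha s hmem)) (lt_irrefl a)
    · rintro ⟨s,hs,hlen,hpw⟩
      rcases (sublist_cons_iff).mp hs with hsub | ⟨t, ht, hsub⟩
      · exact h2 ⟨s,hsub,hlen,hpw⟩
      · subst ht
        -- s = a :: t, t <+ l, pairwise: a < all of t, yet t's elements < a
        rcases t with _ | ⟨x, t'⟩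
        · simp at hlen; omega
        · have hx : x ∈ l := hsub.subset (by simp)
          have : a < x := (pairwise_cons.mp hpw).1 x (by simp)
          exact absurd (lt_trans this (ha x hx)) (lt_irrefl a)

/-- mapping by a function strictly monotone on the entries preserves goodness -/
lemma goodL_map {k : ℕ} {l : List ℕ} {f : ℕ → ℕ}
    (hf : ∀ x ∈ l, ∀ y ∈ l, x < y → f x < f y) :
    GoodL k (l.map f) ↔ GoodL k l := by
  have key : ∀ x ∈ l, ∀ y ∈ l, (f x < f y ↔ x < y) := by
    intro x hx y hy
    constructor
    · intro h
      rcases lt_trichotomy x y with h'|h'|h'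
      · exact h'
      · subst h'; exact absurd h (lt_irrefl _)
      · exact absurd (hf y hy x hx h') (by omega)
    · exact hf x hx y hy
  constructor
  · rintro ⟨h1, h2⟩
    constructor
    · rintro ⟨a,b,c,d,hs,hab1,hab2,hab3⟩
      have hs' : [f a, f b, f c, f d] <+ l.map f := by
        have := hs.map f
        simpa using this
      have ha := hs.subset (show a ∈ [a,b,c,d] by simp)
      have hb := hs.subset (show b ∈ [a,b,c,d] by simp)
      have hc := hs.subset (show c ∈ [a,b,c,d] by simp)
      have hd := hs.subset (show d ∈ [a,b,c,d] by simp)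
      exact h1 ⟨f a, f b, f c, f d, hs', (key a ha d hd).mpr hab1,
        (key b hb d hd).mpr hab2, (key d hd c hc).mpr hab3⟩
    · rintro ⟨s,hsub,hlen,hpw⟩
      refine h2 ⟨s.map f, List.Sublist.map f hsub, by simpa using hlen, ?_⟩
      rw [List.pairwise_map]
      refine hpw.imp_of_mem ?_
      intro x y hx hy hxy
      exact hf x (hsub.subset hx) y (hsub.subset hy) hxy
  · rintro ⟨h1, h2⟩
    constructor
    · rintro ⟨a,b,c,d,hs,hab1,hab2,hab3⟩
      rcases List.sublist_map_iff.mp hs with ⟨t, htsub, hteq⟩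
      rcases t with _|⟨x1,(_|⟨x2,(_|⟨x3,(_|⟨x4,(_|t)⟩)⟩)⟩)⟩ <;> simp_all
      obtain ⟨rfl, rfl, rfl, rfl⟩ := hteq
      have h1' := htsub.subset (show x1 ∈ [x1,x2,x3,x4] by simp)
      have h2' := htsub.subset (show x2 ∈ [x1,x2,x3,x4] by simp)
      have h3' := htsub.subset (show x3 ∈ [x1,x2,x3,x4] by simp)
      have h4' := htsub.subset (show x4 ∈ [x1,x2,x3,x4] by simp)
      exact h1 ⟨x1,x2,x3,x4,htsub,(key x1 h1' x4 h4').mp hab1,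
        (key x2 h2' x4 h4').mp hab2,(key x4 h4' x3 h3').mp hab3⟩
    · rintro ⟨s,hsub,hlen,hpw⟩
      rcases List.sublist_map_iff.mp hsub with ⟨t, htsub, rfl⟩
      refine h2 ⟨t, htsub, by simpa using hlen, ?_⟩
      rw [List.pairwise_map] at hpw
      refine hpw.imp_of_mem ?_
      intro x y hx hy hxy
      rcases lt_trichotomy x y with h'|h'|h'
      · exact h'
      · subst h'; exact absurd hxy (lt_irrefl _)
      · exact absurd (hf y (htsub.subset hy) x (htsub.subset hx) h') (by omega)



lemma pair_sublist_of_mem {l : List ℕ} {a x : ℕ} (ha : a ∈ l) (hx : x ∈ l) (hne : a ≠ x) :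
    [a, x] <+ l ∨ [x, a] <+ l := by
  obtain ⟨s, t, rfl⟩ := List.append_of_mem ha
  rcases List.mem_append.mp hx with hxs | hxt
  · right
    have h1 : [x] <+ s := List.singleton_sublist.mpr hxs
    have h2 : [a] <+ a :: t := by simp
    simpa using h1.append h2
  · rcases List.mem_cons.mp hxt with h | hxt'
    · exact absurd h.symm hne
    · left
      have h1 : [a, x] <+ a :: t := by
        simpa using (List.singleton_sublist.mpr hxt' : [x] <+ t).cons₂ a
      exact h1.trans (List.sublist_append_right s (a :: t))

/-- separation is necessary -/
lemma sep_of_not_bad4 {l₁ l₂ : List ℕ} {M a : ℕ}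
    (hM2 : ∀ y ∈ l₂, y < M)
    (ha : a ∈ l₁)
    (hamin : ∀ x ∈ l₁, a ≤ x)
    (hdisj : ∀ x ∈ l₁, ∀ y ∈ l₂, x ≠ y)
    (hgood : ¬ Bad4 (l₁ ++ M :: l₂)) :
    ∀ x ∈ l₁, x ≠ a → ∀ y ∈ l₂, y < x := by
  intro x hx hxa y hy
  by_contra hcon
  push_neg at hcon
  have hxy : x < y := lt_of_le_of_ne hcon (hdisj x hx y hy)
  have hax : a < x := lt_of_le_of_ne (hamin x hx) (Ne.symm hxa)
  have hay : a < y := lt_trans hax hxy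
  have hyM : y < M := hM2 y hy
  have htail : [M, y] <+ M :: l₂ := by
    simpa using (List.singleton_sublist.mpr hy : [y] <+ l₂).cons₂ M
  rcases pair_sublist_of_mem ha hx hxa.symm with hp | hp
  · refine hgood ⟨a, x, M, y, ?_, hay, hxy, hyM⟩
    simpa using hp.append htail
  · refine hgood ⟨x, a, M, y, ?_, hxy, hay, hyM⟩
    simpa using hp.append htail

/-- the key decomposition lemma -/
lemma good_decomp {k : ℕ} {l₁ l₂ : List ℕ} {M a : ℕ}
    (hM1 : ∀ x ∈ l₁, x < M) (hM2 : ∀ y ∈ l₂, y < M)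
    (hl₁ : l₁.Nodup)
    (ha : a ∈ l₁) (hamin : ∀ x ∈ l₁, a ≤ x)
    (hsep : ∀ x ∈ l₁, x ≠ a → ∀ y ∈ l₂, y < x) :
    GoodL (k+1) (l₁ ++ M :: l₂) ↔ GoodL k l₁ ∧ GoodL (k+1) (a :: l₂) := by
  have hl₂big : l₂ <+ l₁ ++ M :: l₂ :=
    ((List.sublist_cons_self M l₂).trans (List.sublist_append_right l₁ (M :: l₂)))
  have hacons : ∀ t : List ℕ, t <+ l₂ → a :: t <+ l₁ ++ M :: l₂ := by
    intro t ht
    have h1 : [a] <+ l₁ := List.singleton_sublist.mpr ha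
    have h2 : t <+ M :: l₂ := ht.trans (List.sublist_cons_self M l₂)
    simpa using h1.append h2
  -- key: an element of l₁ smaller than an element of l₂ must be a
  have hkey : ∀ x ∈ l₁, ∀ y ∈ l₂, x < y → x = a := by
    intro x hx y hy hxy
    by_contra hne
    exact absurd hxy (not_lt_of_gt (hsep x hx hne y hy))
  constructor
  · rintro ⟨h1, h2⟩
    refine ⟨⟨fun hb => ?_, ?_⟩, ?_, ?_⟩
    · obtain ⟨a', b', c', d', hsb, x1, x2, x3⟩ := hb
      exact h1 ⟨a', b', c', d', hsb.trans (List.sublist_append_left l₁ (M :: l₂)), x1, x2, x3⟩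
    · rintro ⟨s, hs, hlen, hpw⟩
      refine h2 ⟨s ++ [M], ?_, by simp [hlen], ?_⟩
      · have : [M] <+ M :: l₂ := by simp
        exact hs.append this
      · rw [List.pairwise_append]
        refine ⟨hpw, by simp, ?_⟩
        intro x hx y hy
        simp at hy; subst hy
        exact hM1 x (hs.subset hx)
    · rintro ⟨p, q, r, s, hs, h1', h2', h3'⟩
      rcases List.sublist_cons_iff.mp hs with hsub | ⟨t, ht, hsub⟩
      · exact h1 ⟨p, q, r, s, hsub.trans hl₂big, h1', h2', h3'⟩
      · cases ht
        exact h1 ⟨a, q, r, s, hacons _ hsub, h1', h2', h3'⟩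
    · rintro ⟨s, hs, hlen, hpw⟩
      rcases List.sublist_cons_iff.mp hs with hsub | ⟨t, ht, hsub⟩
      · exact h2 ⟨s, hsub.trans hl₂big, hlen, hpw⟩
      · subst ht
        exact h2 ⟨a :: t, hacons _ hsub, hlen, hpw⟩
  · rintro ⟨⟨g1, g2⟩, g3, g4⟩
    constructor
    · rintro ⟨p, q, r, s, hs, h1', h2', h3'⟩
      rcases List.sublist_append_iff.mp hs with ⟨u, v, huv, hu, hv⟩
      -- case on the shape of u as a prefix of [p,q,r,s]
      have hvcases := List.sublist_cons_iff.mp hv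
      rcases u with _ | ⟨u1, (_ | ⟨u2, (_ | ⟨u3, (_ | ⟨u4, (_ | u')⟩)⟩)⟩)⟩ <;>
        simp only [List.nil_append, List.cons_append] at huv
      · -- u = [], v = [p,q,r,s]
        subst huv
        rcases hvcases with hsub | ⟨t, ht, hsub⟩
        · exact g3 ⟨p, q, r, s, hsub.trans (List.sublist_cons_self a l₂), h1', h2', h3'⟩
        · -- p = M
          injection ht with hpM ht'
          subst hpM
          have : s ∈ l₂ := by
            subst ht'
            exact hsub.subset (by simp)
          exact absurd (lt_trans h1' (hM2 s this)) (lt_irrefl _)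
      · -- u = [p], v = [q,r,s]
        injection huv with e1 e2
        subst e1; subst e2
        have hpl : p ∈ l₁ := hu.subset (by simp)
        rcases hvcases with hsub | ⟨t, ht, hsub⟩
        · have hsl : s ∈ l₂ := hsub.subset (by simp)
          have hpa : p = a := hkey p hpl s hsl h1'
          subst hpa
          exact g3 ⟨p, q, r, s, hsub.cons₂ p, h1', h2', h3'⟩
        · injection ht with hqM ht'
          subst hqM
          have : s ∈ l₂ := by subst ht'; exact hsub.subset (by simp)
          exact absurd (lt_trans h2' (hM2 s this)) (lt_irrefl _)
      · -- u = [p,q], v = [r,s]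
        injection huv with e1 e2
        injection e2 with e3 e4
        subst e1; subst e3; subst e4
        have hpl : p ∈ l₁ := hu.subset (by simp)
        have hql : q ∈ l₁ := hu.subset (by simp)
        have hpq : p ≠ q := by
          have hnd := List.Nodup.sublist hu hl₁
          simp [List.nodup_cons] at hnd
          tauto
        rcases hvcases with hsub | ⟨t, ht, hsub⟩
        · have hsl : s ∈ l₂ := hsub.subset (by simp)
          have e1 : p = a := hkey p hpl s hsl h1'
          have e2 : q = a := hkey q hql s hsl h2'
          exact hpq (e1.trans e2.symm)
        · injection ht with hrM ht'
          subst hrM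
          have hsl : s ∈ l₂ := by subst ht'; exact hsub.subset (by simp)
          have e1 : p = a := hkey p hpl s hsl h1'
          have e2 : q = a := hkey q hql s hsl h2'
          exact hpq (e1.trans e2.symm)
      · -- u = [p,q,r], v = [s]
        injection huv with e1 e2
        injection e2 with e3 e4
        injection e4 with e5 e6
        subst e1; subst e3; subst e5; subst e6
        have hpl : p ∈ l₁ := hu.subset (by simp)
        have hql : q ∈ l₁ := hu.subset (by simp)
        have hpq : p ≠ q := by
          have hnd := List.Nodup.sublist hu hl₁
          simp [List.nodup_cons] at hnd
          tauto
        rcases hvcases with hsub | ⟨t, ht, hsub⟩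
        · have hsl : s ∈ l₂ := hsub.subset (by simp)
          have e1 : p = a := hkey p hpl s hsl h1'
          have e2 : q = a := hkey q hql s hsl h2'
          exact hpq (e1.trans e2.symm)
        · injection ht with hsM ht'
          subst hsM
          have hrl : r ∈ l₁ := hu.subset (by simp)
          exact absurd (lt_trans h3' (hM1 r hrl)) (lt_irrefl _)
      · -- u = [u1,u2,u3,u4], v = []
        injection huv with e1 e2
        injection e2 with e3 e4
        injection e4 with e5 e6
        injection e6 with e7 e8
        obtain rfl : v = [] := e8.symm
        subst e1; subst e3; subst e5; subst e7
        have hu' : [p, q, r, s] <+ l₁ := by simpa using hu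
        exact g1 ⟨p, q, r, s, hu', h1', h2', h3'⟩
      · -- u has length ≥ 5 : impossible
        injection huv with e1 e2
        injection e2 with e3 e4
        injection e4 with e5 e6
        injection e6 with e7 e8
        exact absurd e8 (by simp)
    · rintro ⟨s, hs, hlen, hpw⟩
      rcases List.sublist_append_iff.mp hs with ⟨u, v, rfl, hu, hv⟩
      rcases List.sublist_cons_iff.mp hv with hsub | ⟨t, ht, hsub⟩
      · -- v <+ l₂
        rcases u with _ | ⟨u1, u'⟩
        · simp at hs hlen hpw ⊢
          exact g4 ⟨v, hsub.trans (List.sublist_cons_self a l₂), hlen, hpw⟩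
        · rcases v with _ | ⟨v1, v'⟩
          · -- s = u entirely in l₁, length k+1
            simp at hlen
            refine g2 ⟨(u1 :: u').take k, ((u1 :: u').take_sublist k).trans hu, ?_, ?_⟩
            · simp [hlen]
            · exact List.Pairwise.sublist ((u1 :: u').take_sublist k) (by simpa using hpw)
          · -- u nonempty, v nonempty: all elements of u are a
            rw [List.pairwise_append] at hpw
            have hv1 : v1 ∈ l₂ := hsub.subset (by simp)
            have hall : ∀ x ∈ u1 :: u', x = a := by
              intro x hx
              exact hkey x (hu.subset hx) v1 hv1 (hpw.2.2 x hx v1 (by simp))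
            have hlen1 : (u1 :: u').length = 1 := by
              have hnd : (u1 :: u').Nodup := List.Nodup.sublist hu hl₁
              rcases u' with _ | ⟨u2, u''⟩
              · rfl
              · exfalso
                have e1 : u1 = a := hall u1 (by simp)
                have e2 : u2 = a := hall u2 (by simp)
                have : u1 ≠ u2 := by simp [List.nodup_cons] at hnd; tauto
                exact this (e1.trans e2.symm)
            rcases u' with _ | _
            · have e1 : u1 = a := hall u1 (by simp)
              subst e1
              refine g4 ⟨u1 :: v1 :: v', hsub.cons₂ u1, by simpa using hlen,
                List.pairwise_cons.mpr ⟨fun y hy => hpw.2.2 u1 (by simp) y hy, hpw.2.1⟩⟩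
            · simp at hlen1
      · -- v = M :: t
        subst ht
        rw [List.pairwise_append] at hpw
        have hMt : (M :: t).Pairwise (· < ·) := hpw.2.1
        rcases t with _ | ⟨t1, t'⟩
        · -- s = u ++ [M], u has length k, increasing in l₁
          refine g2 ⟨u, hu, ?_, hpw.1⟩
          · simp at hlen; omega
        · exfalso
          have ht1 : t1 ∈ l₂ := hsub.subset (by simp)
          have : M < t1 := (List.pairwise_cons.mp hMt).1 t1 (by simp)
          exact absurd (lt_trans this (hM2 t1 ht1)) (lt_irrefl _)



lemma finite_len_mem (S : Finset ℕ) : ∀ n : ℕ, {l : List ℕ | l.length = n ∧ ∀ x ∈ l, x ∈ S}.Finite := by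
  intro n
  induction n with
  | zero =>
    apply Set.Finite.subset (Set.finite_singleton ([] : List ℕ))
    rintro l ⟨h, -⟩
    simp [List.length_eq_zero_iff.mp h]
  | succ n ih =>
    apply Set.Finite.subset (Set.Finite.image (fun p : ℕ × List ℕ => p.1 :: p.2)
      ((S.finite_toSet).prod ih))
    rintro (_ | ⟨a, l⟩) ⟨hlen, hmem⟩
    · simp at hlen
    · refine ⟨(a, l), ⟨by simpa using hmem a (by simp), by simpa using hlen, ?_⟩, rfl⟩
      intro x hx; exact hmem x (by simp [hx])

lemma finite_GL (k : ℕ) (S : Finset ℕ) :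
    {l : List ℕ | l.Nodup ∧ l.toFinset = S ∧ GoodL k l}.Finite := by
  apply Set.Finite.subset (finite_len_mem S S.card)
  rintro l ⟨h1, h2, -⟩
  refine ⟨by rw [← h2, List.toFinset_card_of_nodup h1], fun x hx => by rw [← h2]; simpa using hx⟩

/-- the finset of good lists with value set `S` -/
noncomputable def GLF (k : ℕ) (S : Finset ℕ) : Finset (List ℕ) := (finite_GL k S).toFinset

lemma mem_GLF {k : ℕ} {S : Finset ℕ} {l : List ℕ} :
    l ∈ GLF k S ↔ l.Nodup ∧ l.toFinset = S ∧ GoodL k l := by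
  simp [GLF]

lemma card_GLF_eq (k : ℕ) (S : Finset ℕ) :
    Nat.card {l : List ℕ // l.Nodup ∧ l.toFinset = S ∧ GoodL k l} = (GLF k S).card := by
  have e : Nat.card {l : List ℕ // l.Nodup ∧ l.toFinset = S ∧ GoodL k l} =
      Nat.card ↥{l : List ℕ | l.Nodup ∧ l.toFinset = S ∧ GoodL k l} := rfl
  rw [e, Nat.card_coe_set_eq, Set.ncard_eq_toFinset_card _ (finite_GL k S)]
  rfl

-- splitting
def splitA (a : ℕ) (l : List ℕ) : List ℕ := l.takeWhile (· ≠ a)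
def splitB (a : ℕ) (l : List ℕ) : List ℕ := (l.dropWhile (· ≠ a)).tail

lemma split_spec {a : ℕ} {l : List ℕ} (h : a ∈ l) :
    l = splitA a l ++ a :: splitB a l ∧ a ∉ splitA a l := by
  induction l with
  | nil => simp at h
  | cons x xs ih =>
    by_cases hxa : x = a
    · subst hxa
      simp [splitA, splitB]
    · have hx : a ∈ xs := by rcases List.mem_cons.mp h with h' | h'; exact absurd h'.symm hxa; exact h'
      obtain ⟨ih1, ih2⟩ := ih hx
      constructor
      · simp only [splitA, splitB, List.takeWhile_cons, List.dropWhile_cons]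
        simp only [hxa, decide_eq_true_eq]
        simp [hxa]
        simpa [splitA, splitB] using ih1
      · simp only [splitA, List.takeWhile_cons]
        simp [hxa]
        refine ⟨fun h' => hxa h'.symm, ?_⟩
        simpa [splitA] using ih2

lemma split_eq {a : ℕ} {l₁ l₂ : List ℕ} (h : a ∉ l₁) :
    splitA a (l₁ ++ a :: l₂) = l₁ ∧ splitB a (l₁ ++ a :: l₂) = l₂ := by
  induction l₁ with
  | nil => simp [splitA, splitB]
  | cons x xs ih =>
    have hxa : x ≠ a := fun h' => h (h' ▸ (List.mem_cons_self : x ∈ x :: xs))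
    have hx : a ∉ xs := fun h' => h (List.mem_cons_of_mem x h')
    obtain ⟨ih1, ih2⟩ := ih hx
    constructor
    · simp only [splitA, List.cons_append, List.takeWhile_cons]
      simp [hxa]
      simpa [splitA] using ih1
    · simp only [splitB, List.cons_append, List.dropWhile_cons]
      simp [hxa]
      simpa [splitB] using ih2

def minL (l : List ℕ) : ℕ := (l.min?).getD 0

lemma minL_spec {l : List ℕ} (h : l ≠ []) : minL l ∈ l ∧ ∀ x ∈ l, minL l ≤ x := by
  rcases hm : l.min? with _ | a
  · rw [List.min?_eq_none_iff] at hm; exact absurd hm h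
  · obtain ⟨h1, h2⟩ := List.min?_eq_some_iff'.mp hm
    constructor
    · simpa [minL, hm] using h1
    · simpa [minL, hm] using h2

lemma minL_eq {l : List ℕ} {a : ℕ} (h1 : a ∈ l) (h2 : ∀ x ∈ l, a ≤ x) : minL l = a := by
  have : l.min? = some a := List.min?_eq_some_iff'.mpr ⟨h1, h2⟩
  simp [minL, this]


lemma GLF_length {k : ℕ} {S : Finset ℕ} {l : List ℕ} (hl : l ∈ GLF k S) :
    l.length = S.card := by
  obtain ⟨h1, h2, -⟩ := mem_GLF.mp hl
  rw [← h2, List.toFinset_card_of_nodup h1]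

lemma fiber0_card (k m : ℕ) :
    (Finset.filter (fun l => (splitA m l).length = 0) (GLF (k+2) (Finset.range (m+1)))).card
      = (GLF (k+2) (Finset.range m)).card := by
  apply Finset.card_nbij' (fun l => l.tail) (fun l => m :: l)
  · -- forward well-defined
    intro l hl
    obtain ⟨hmem, hfib⟩ := Finset.mem_filter.mp hl
    obtain ⟨h1, h2, h3⟩ := mem_GLF.mp hmem
    have hm : m ∈ l := by rw [← List.mem_toFinset, h2]; simp
    obtain ⟨hsp, -⟩ := split_spec hm
    have hA : splitA m l = [] := List.length_eq_zero_iff.mp hfib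
    rw [hA] at hsp
    simp only [List.nil_append] at hsp
    obtain ⟨B, rfl⟩ : ∃ B, l = m :: B := ⟨splitB m l, hsp⟩
    have hmB : m ∉ B := (List.nodup_cons.mp h1).1
    have hBset : B.toFinset = Finset.range m := by
      have h2' : insert m B.toFinset = Finset.range (m+1) := by simpa using h2
      have h2e := congrArg (Finset.erase · m) h2'
      rw [Finset.erase_insert (by simp [hmB])] at h2e
      rw [h2e]
      ext x
      simp only [Finset.mem_erase, Finset.mem_range]
      omega
    have hlt : ∀ x ∈ B, x < m := fun x hx => by
      have : x ∈ Finset.range m := by rw [← hBset]; simpa using hx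
      simpa using this
    rw [Finset.mem_coe, mem_GLF]
    exact ⟨(List.nodup_cons.mp h1).2, hBset, (goodL_cons_max (by omega) hlt).mp h3⟩
  · -- backward well-defined
    intro l hl
    obtain ⟨h1, h2, h3⟩ := mem_GLF.mp hl
    have hmB : m ∉ l := by
      intro h
      have : m ∈ Finset.range m := by rw [← h2]; simpa using h
      simp at this
    have hlt : ∀ x ∈ l, x < m := by
      intro x hx
      have : x ∈ Finset.range m := by rw [← h2]; simpa using hx
      simpa using this
    rw [Finset.mem_coe, Finset.mem_filter, mem_GLF]
    refine ⟨⟨?_, ?_, ?_⟩, ?_⟩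
    · exact List.nodup_cons.mpr ⟨hmB, h1⟩
    · simp [h2, Finset.range_add_one]
    · exact (goodL_cons_max (by omega) hlt).mpr h3
    · simp [splitA, List.takeWhile_cons]
  · intro l hl
    obtain ⟨hmem, hfib⟩ := Finset.mem_filter.mp hl
    obtain ⟨h1, h2, -⟩ := mem_GLF.mp hmem
    have hm : m ∈ l := by rw [← List.mem_toFinset, h2]; simp
    obtain ⟨hsp, -⟩ := split_spec hm
    have hA : splitA m l = [] := List.length_eq_zero_iff.mp hfib
    rw [hA] at hsp
    simp only [List.nil_append] at hsp
    obtain ⟨B, rfl⟩ : ∃ B, l = m :: B := ⟨splitB m l, hsp⟩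
    rfl
  · intro l hl
    rfl


def fwdF (m j : ℕ) (l : List ℕ) : List ℕ × List ℕ :=
  ((splitA m l).map (fun x => if x = minL (splitA m l) then 0 else x - (m - j - 1)),
   minL (splitA m l) :: splitB m l)

def bwdF (m j : ℕ) (p : List ℕ × List ℕ) : List ℕ :=
  (p.1.map (fun x => if x = 0 then p.2.headD 0 else x + (m - j - 1))) ++ m :: p.2.tail

lemma fwd_lemma (k m j : ℕ) (hj : j < m) {l : List ℕ}
    (hmem : l ∈ GLF (k+2) (Finset.range (m+1)))
    (hfib : (splitA m l).length = j + 1) :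
    fwdF m j l ∈ (GLF (k+1) (Finset.range (j+1))) ×ˢ (GLF (k+2) (Finset.range (m-j))) ∧
      bwdF m j (fwdF m j l) = l := by
  set r := m - j with hrdef
  have hr1 : 1 ≤ r := by omega
  have hrm : r ≤ m := by omega
  obtain ⟨h1, h2, h3⟩ := mem_GLF.mp hmem
  have hm : m ∈ l := by rw [← List.mem_toFinset, h2]; simp
  obtain ⟨hsp, hmA⟩ := split_spec hm
  set A := splitA m l with hAdef
  set B := splitB m l with hBdef
  -- lengths
  have hlen : l.length = m + 1 := by
    rw [← List.toFinset_card_of_nodup h1, h2, Finset.card_range]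
  have hlenB : B.length = r - 1 := by
    rw [hsp] at hlen
    simp only [List.length_append, List.length_cons] at hlen
    omega
  -- nodup components
  have h1' := h1
  rw [hsp, List.nodup_append] at h1'
  obtain ⟨hAnd, hmBnd, hdisj0⟩ := h1'
  have hmB : m ∉ B := (List.nodup_cons.mp hmBnd).1
  have hBnd : B.Nodup := (List.nodup_cons.mp hmBnd).2
  have hdisj : ∀ x ∈ A, ∀ y ∈ B, x ≠ y := by
    intro x hx y hy h
    exact hdisj0 x hx y (by simp [hy]) h
  -- entries bounds
  have hAin : ∀ x ∈ A, x < m := by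
    intro x hx
    have hx1 : x ∈ l.toFinset := by rw [hsp]; simp [hx]
    have hx2 : x < m + 1 := by rw [h2] at hx1; simpa using hx1
    have : x ≠ m := fun h => hdisj0 x hx m (by simp) h
    omega
  have hBin : ∀ y ∈ B, y < m := by
    intro y hy
    have hy1 : y ∈ l.toFinset := by rw [hsp]; simp [hy]
    have hy2 : y < m + 1 := by rw [h2] at hy1; simpa using hy1
    have : y ≠ m := fun h => hmB (h ▸ hy)
    omega
  have hAne : A ≠ [] := by
    intro h; rw [h] at hfib; simp at hfib
  obtain ⟨haA, hamin⟩ := minL_spec hAne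
  set a := minL A with hadef
  -- separation
  have hsep : ∀ x ∈ A, x ≠ a → ∀ y ∈ B, y < x := by
    apply sep_of_not_bad4 hBin haA hamin hdisj
    rw [hsp] at h3
    exact h3.1
  -- decomposition
  have hdec := (good_decomp hAin hBin hAnd haA hamin hsep).mp (by rw [hsp] at h3; exact h3)
  obtain ⟨hAgood, hρgood⟩ := hdec
  -- elements of A other than a are ≥ r
  have hge : ∀ x ∈ A, x ≠ a → r ≤ x := by
    intro x hx hxa
    have hsub : insert a B.toFinset ⊆ Finset.range x := by
      intro y hy
      rcases Finset.mem_insert.mp hy with rfl | hy'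
      · exact Finset.mem_range.mpr (lt_of_le_of_ne (hamin x hx) (Ne.symm hxa))
      · exact Finset.mem_range.mpr (hsep x hx hxa y (List.mem_toFinset.mp hy'))
    have hcard : (insert a B.toFinset).card = r := by
      rw [Finset.card_insert_of_notMem (by
        intro h
        exact hdisj a haA a (List.mem_toFinset.mp h) rfl)]
      rw [List.toFinset_card_of_nodup hBnd, hlenB]
      omega
    have := Finset.card_le_card hsub
    rw [hcard, Finset.card_range] at this
    exact this
  -- a < r
  have ha_lt : a < r := by
    by_contra hcon
    push_neg at hcon
    have hsub : A.toFinset ⊆ Finset.Ico r m := by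
      intro x hx
      have hx' := List.mem_toFinset.mp hx
      rcases eq_or_ne x a with rfl | hne
      · exact Finset.mem_Ico.mpr ⟨hcon, hAin _ hx'⟩
      · exact Finset.mem_Ico.mpr ⟨hge x hx' hne, hAin x hx'⟩
    have := Finset.card_le_card hsub
    rw [List.toFinset_card_of_nodup hAnd, hfib, Nat.card_Ico] at this
    omega
  -- A.toFinset
  have hAset : A.toFinset = insert a (Finset.Ico r m) := by
    apply Finset.eq_of_subset_of_card_le
    · intro x hx
      have hx' := List.mem_toFinset.mp hx
      rcases eq_or_ne x a with rfl | hne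
      · simp
      · exact Finset.mem_insert.mpr (Or.inr (Finset.mem_Ico.mpr ⟨hge x hx' hne, hAin x hx'⟩))
    · rw [Finset.card_insert_of_notMem (by simp [Finset.mem_Ico]; omega),
        List.toFinset_card_of_nodup hAnd, hfib, Nat.card_Ico]
      omega
  -- B.toFinset
  have hBset : B.toFinset = Finset.range r \ {a} := by
    ext y
    simp only [List.mem_toFinset, Finset.mem_sdiff, Finset.mem_range, Finset.mem_singleton]
    constructor
    · intro hy
      have hya : y ≠ a := fun h => hdisj a haA y hy h.symm
      refine ⟨?_, hya⟩
      by_contra hcon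
      push_neg at hcon
      have : y ∈ A.toFinset := by
        rw [hAset]
        exact Finset.mem_insert.mpr (Or.inr (Finset.mem_Ico.mpr ⟨hcon, hBin y hy⟩))
      exact hdisj y (List.mem_toFinset.mp this) y hy rfl
    · rintro ⟨hyr, hya⟩
      have hy1 : y ∈ l.toFinset := by rw [h2]; simp; omega
      rw [hsp] at hy1
      simp only [List.toFinset_append, List.toFinset_cons, Finset.mem_union,
        Finset.mem_insert, List.mem_toFinset] at hy1
      rcases hy1 with hyA | hym | hyB
      · exfalso
        have : y ∈ A.toFinset := List.mem_toFinset.mpr hyA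
        rw [hAset] at this
        rcases Finset.mem_insert.mp this with rfl | hIco
        · exact hya rfl
        · have := Finset.mem_Ico.mp hIco
          omega
      · omega
      · exact hyB
  -- now the two components
  have hfwd : fwdF m j l = (A.map (fun x => if x = a then 0 else x - (r-1)), a :: B) := rfl
  constructor
  · rw [hfwd, Finset.mem_product]
    constructor
    · -- sigma component
      rw [mem_GLF]
      refine ⟨?_, ?_, ?_⟩
      · apply List.Nodup.map_on ?_ hAnd
        intro x hx y hy hfxy
        by_cases hxa : x = a <;> by_cases hya : y = a
        · rw [hxa, hya]
        · exfalso
          have := hge y hy hya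
          simp [hxa, hya] at hfxy
          omega
        · exfalso
          have := hge x hx hxa
          simp [hxa, hya] at hfxy
          omega
        · have hx' := hge x hx hxa
          have hy' := hge y hy hya
          simp [hxa, hya] at hfxy
          omega
      · ext v
        simp only [List.mem_toFinset, List.mem_map, Finset.mem_range]
        constructor
        · rintro ⟨x, hx, rfl⟩
          by_cases hxa : x = a
          · simp [hxa]
          · have := hge x hx hxa
            have := hAin x hx
            simp [hxa]
            omega
        · intro hv
          by_cases hv0 : v = 0
          · exact ⟨a, haA, by simp [hv0]⟩
          · refine ⟨v + (r - 1), ?_, ?_⟩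
            · rw [← List.mem_toFinset, hAset]
              refine Finset.mem_insert.mpr (Or.inr (Finset.mem_Ico.mpr ⟨by omega, by omega⟩))
            · have : v + (r-1) ≠ a := by omega
              simp [this]
      · refine (goodL_map ?_).mpr hAgood
        intro x hx y hy hxy
        by_cases hxa : x = a
        · have hya : y ≠ a := by
            intro h; rw [hxa, h] at hxy; exact lt_irrefl _ hxy
          have := hge y hy hya
          simp [hxa, hya]
          omega
        · have hya : y ≠ a := by
            intro h; subst h
            exact absurd (hamin x hx) (by omega)
          have := hge x hx hxa
          have := hge y hy hya
          simp [hxa, hya]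
          omega
    · -- rho component
      rw [mem_GLF]
      refine ⟨?_, ?_, ?_⟩
      · exact List.nodup_cons.mpr ⟨fun h => hdisj a haA a h rfl, hBnd⟩
      · simp only [List.toFinset_cons, hBset]
        ext y
        simp only [Finset.mem_insert, Finset.mem_sdiff, Finset.mem_range, Finset.mem_singleton]
        constructor
        · rintro (rfl | ⟨h, -⟩) <;> omega
        · intro h
          rcases eq_or_ne y a with rfl | hne
          · exact Or.inl rfl
          · exact Or.inr ⟨h, hne⟩
      · exact hρgood
  · -- bwd ∘ fwd = id
    rw [hfwd]
    simp only [bwdF]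
    have hhead : (a :: B).headD 0 = a := rfl
    have htail : (a :: B).tail = B := rfl
    rw [hhead, htail, List.map_map]
    have : A.map ((fun x => if x = 0 then a else x + (r - 1)) ∘
        (fun x => if x = a then 0 else x - (r - 1))) = A.map id := by
      apply List.map_congr_left
      intro x hx
      by_cases hxa : x = a
      · simp [hxa]
      · have := hge x hx hxa
        have h1 : x - (r-1) ≠ 0 := by omega
        simp only [Function.comp_apply, hxa, if_false, h1, if_false, id]
        omega
    rw [this, List.map_id]
    exact hsp.symm


lemma bwd_lemma (k m j : ℕ) (hj : j < m) {σ ρ : List ℕ}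
    (hσ : σ ∈ GLF (k+1) (Finset.range (j+1)))
    (hρ : ρ ∈ GLF (k+2) (Finset.range (m-j))) :
    bwdF m j (σ, ρ) ∈ Finset.filter (fun l => (splitA m l).length = j + 1)
        (GLF (k+2) (Finset.range (m+1))) ∧
      fwdF m j (bwdF m j (σ, ρ)) = (σ, ρ) := by
  set r := m - j with hrdef
  have hr1 : 1 ≤ r := by omega
  have hrm : r ≤ m := by omega
  obtain ⟨hσnd, hσset, hσgood⟩ := mem_GLF.mp hσ
  obtain ⟨hρnd, hρset, hρgood⟩ := mem_GLF.mp hρ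
  rcases ρ with _ | ⟨a, B⟩
  · exfalso
    have : (0:ℕ) ∈ Finset.range r := by simp; omega
    rw [← hρset] at this
    simp at this
  have haB : a ∉ B := (List.nodup_cons.mp hρnd).1
  have hBnd : B.Nodup := (List.nodup_cons.mp hρnd).2
  have ha_lt : a < r := by
    have : a ∈ (a :: B).toFinset := by simp
    rw [hρset] at this
    simpa using this
  have hBset : B.toFinset = Finset.range r \ {a} := by
    have h2' : insert a B.toFinset = Finset.range r := by simpa using hρset
    have h2e := congrArg (Finset.erase · a) h2'
    rw [Finset.erase_insert (by simp [haB])] at h2e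
    rw [h2e, Finset.erase_eq]
  have hBmem : ∀ y, y ∈ B ↔ (y < r ∧ y ≠ a) := by
    intro y
    rw [← List.mem_toFinset, hBset]
    simp
  have hσmem : ∀ x, x ∈ σ ↔ x < j + 1 := by
    intro x
    rw [← List.mem_toFinset, hσset]
    simp
  set g := fun x => if x = 0 then a else x + (r-1) with hgdef
  set A := σ.map g with hAdef
  have hgmono : ∀ x ∈ σ, ∀ y ∈ σ, x < y → g x < g y := by
    intro x hx y hy hxy
    have hxj := (hσmem x).mp hx
    have hyj := (hσmem y).mp hy
    by_cases hx0 : x = 0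
    · have hy0 : y ≠ 0 := by omega
      simp [hgdef, hx0, hy0]
      omega
    · have hy0 : y ≠ 0 := by omega
      simp [hgdef, hx0, hy0]
      omega
  have hAmem : ∀ v, v ∈ A ↔ (v = a ∨ (r ≤ v ∧ v < m)) := by
    intro v
    simp only [hAdef, List.mem_map]
    constructor
    · rintro ⟨x, hx, rfl⟩
      have hxj := (hσmem x).mp hx
      by_cases hx0 : x = 0
      · simp [hgdef, hx0]
      · right
        simp [hgdef, hx0]
        omega
    · rintro (rfl | ⟨hv1, hv2⟩)
      · exact ⟨0, (hσmem 0).mpr (by omega), by simp [hgdef]⟩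
      · refine ⟨v - (r-1), (hσmem _).mpr (by omega), ?_⟩
        have : v - (r-1) ≠ 0 := by omega
        simp [hgdef, this]
        omega
  have hAnd : A.Nodup := by
    apply List.Nodup.map_on ?_ hσnd
    intro x hx y hy hgxy
    have hxj := (hσmem x).mp hx
    have hyj := (hσmem y).mp hy
    by_cases hx0 : x = 0 <;> by_cases hy0 : y = 0
    · rw [hx0, hy0]
    · simp [hgdef, hx0, hy0] at hgxy; omega
    · simp [hgdef, hx0, hy0] at hgxy; omega
    · simp [hgdef, hx0, hy0] at hgxy; omega
  have hAin : ∀ x ∈ A, x < m := by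
    intro x hx
    rcases (hAmem x).mp hx with rfl | ⟨-, h⟩
    · omega
    · exact h
  have hBin : ∀ y ∈ B, y < m := by
    intro y hy
    have := (hBmem y).mp hy
    omega
  have haA : a ∈ A := (hAmem a).mpr (Or.inl rfl)
  have hamin : ∀ x ∈ A, a ≤ x := by
    intro x hx
    rcases (hAmem x).mp hx with rfl | ⟨h, -⟩ <;> omega
  have hminL : minL A = a := minL_eq haA hamin
  have hsep : ∀ x ∈ A, x ≠ a → ∀ y ∈ B, y < x := by
    intro x hx hxa y hy
    rcases (hAmem x).mp hx with rfl | ⟨h, -⟩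
    · exact absurd rfl hxa
    · have := (hBmem y).mp hy
      omega
  have hgood : GoodL (k+2) (A ++ m :: B) :=
    (good_decomp hAin hBin hAnd haA hamin hsep).mpr
      ⟨(goodL_map hgmono).mpr hσgood, hρgood⟩
  have hmA : m ∉ A := by
    intro h
    rcases (hAmem m).mp h with rfl | ⟨-, h2⟩ <;> omega
  have hmB : m ∉ B := by
    intro h
    have := (hBmem m).mp h
    omega
  have hnd : (A ++ m :: B).Nodup := by
    rw [List.nodup_append]
    refine ⟨hAnd, List.nodup_cons.mpr ⟨hmB, hBnd⟩, ?_⟩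
    intro x hx _ hx2 rfl
    rcases List.mem_cons.mp hx2 with rfl | hxB
    · exact hmA hx
    · have h1 := (hAmem x).mp hx
      have h2 := (hBmem x).mp hxB
      rcases h1 with rfl | ⟨h3, -⟩
      · exact h2.2 rfl
      · omega
  have hset : (A ++ m :: B).toFinset = Finset.range (m+1) := by
    ext x
    simp only [List.toFinset_append, List.toFinset_cons, Finset.mem_union, Finset.mem_insert,
      List.mem_toFinset, Finset.mem_range]
    constructor
    · rintro (hA | rfl | hB)
      · have := (hAmem x).mp hA; omega
      · omega
      · have := (hBmem x).mp hB; omega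
    · intro hx
      by_cases hxm : x = m
      · exact Or.inr (Or.inl hxm)
      by_cases hxa : x = a
      · exact Or.inl ((hAmem x).mpr (Or.inl hxa))
      by_cases hxr : r ≤ x
      · exact Or.inl ((hAmem x).mpr (Or.inr ⟨hxr, by omega⟩))
      · exact Or.inr (Or.inr ((hBmem x).mpr ⟨by omega, hxa⟩))
  have hσlen : σ.length = j + 1 := by
    rw [← List.toFinset_card_of_nodup hσnd, hσset, Finset.card_range]
  obtain ⟨hspA, hspB⟩ := split_eq (l₂ := B) hmA
  have hbwd : bwdF m j (σ, a :: B) = A ++ m :: B := rfl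
  constructor
  · rw [hbwd, Finset.mem_filter, mem_GLF]
    refine ⟨⟨hnd, hset, hgood⟩, ?_⟩
    rw [hspA]
    simp [hAdef, hσlen]
  · rw [hbwd]
    have e : fwdF m j (A ++ m :: B) =
        (A.map (fun x => if x = a then 0 else x - (r-1)), a :: B) := by
      simp only [fwdF, hspA, hspB, hminL, hrdef]
    rw [e]
    have : A.map (fun x => if x = a then 0 else x - (r-1)) = σ := by
      rw [hAdef, List.map_map]
      have : σ.map ((fun x => if x = a then 0 else x - (r-1)) ∘ g) = σ.map id := by
        apply List.map_congr_left
        intro x hx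
        have hxj := (hσmem x).mp hx
        by_cases hx0 : x = 0
        · simp [hgdef, hx0]
        · have hne : x + (r-1) ≠ a := by omega
          simp [hgdef, hx0, hne]
      rw [this, List.map_id]
    rw [this]


lemma GLF_rec (k m : ℕ) :
    (GLF (k+2) (Finset.range (m+1))).card =
      (GLF (k+2) (Finset.range m)).card +
      ∑ j ∈ Finset.range m,
        (GLF (k+1) (Finset.range (j+1))).card * (GLF (k+2) (Finset.range (m-j))).card := by
  have hfib : ∀ l ∈ GLF (k+2) (Finset.range (m+1)),
      (splitA m l).length ∈ Finset.range (m+1) := by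
    intro l hl
    obtain ⟨h1, h2, -⟩ := mem_GLF.mp hl
    have hm : m ∈ l := by rw [← List.mem_toFinset, h2]; simp
    obtain ⟨hsp, -⟩ := split_spec hm
    have hlen : l.length = m + 1 := by
      rw [← List.toFinset_card_of_nodup h1, h2, Finset.card_range]
    rw [hsp] at hlen
    simp only [List.length_append, List.length_cons] at hlen
    simp only [Finset.mem_range]
    omega
  rw [Finset.card_eq_sum_card_fiberwise hfib, Finset.sum_range_succ', add_comm]
  congr 1
  · exact fiber0_card k m
  · apply Finset.sum_congr rfl
    intro j hj
    have hjm : j < m := Finset.mem_range.mp hj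
    rw [← Finset.card_product]
    apply Finset.card_nbij' (fwdF m j) (bwdF m j)
    · intro l hl
      obtain ⟨h1, h2⟩ := Finset.mem_filter.mp hl
      exact (fwd_lemma k m j hjm h1 h2).1
    · intro p hp
      obtain ⟨hσ, hρ⟩ := Finset.mem_product.mp hp
      exact (bwd_lemma k m j hjm hσ hρ).1
    · intro l hl
      obtain ⟨h1, h2⟩ := Finset.mem_filter.mp hl
      exact (fwd_lemma k m j hjm h1 h2).2
    · intro p hp
      obtain ⟨hσ, hρ⟩ := Finset.mem_product.mp hp
      have := (bwd_lemma k m j hjm hσ hρ).2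
      simpa using this

lemma goodL_of_pairwise_gt {k : ℕ} (hk : 2 ≤ k) {l : List ℕ} (h : l.Pairwise (· > ·)) :
    GoodL k l := by
  constructor
  · rintro ⟨a, b, c, d, hs, h1, h2, h3⟩
    have := h.sublist hs
    simp at this
    omega
  · rintro ⟨s, hs, hlen, hpw⟩
    have hgt := h.sublist hs
    rcases s with _ | ⟨x, (_ | ⟨y, t⟩)⟩
    · simp at hlen; omega
    · simp at hlen; omega
    · have h1 : x < y := (List.pairwise_cons.mp hpw).1 y (by simp)
      have h2 : x > y := (List.pairwise_cons.mp hgt).1 y (by simp)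
      omega

lemma GLF_two (m : ℕ) : (GLF 2 (Finset.range m)).card = 1 := by
  have hw : (List.range m).reverse ∈ GLF 2 (Finset.range m) := by
    rw [mem_GLF]
    refine ⟨by simp [List.nodup_range], by ext x; simp, ?_⟩
    apply goodL_of_pairwise_gt le_rfl
    rw [List.pairwise_reverse]
    simpa using List.pairwise_lt_range (n := m)
  apply Finset.card_eq_one.mpr
  refine ⟨(List.range m).reverse, ?_⟩
  ext l
  simp only [Finset.mem_singleton]
  constructor
  · intro hl
    obtain ⟨h1, h2, h3, h4⟩ := mem_GLF.mp hl
    have hpw : l.Pairwise (· > ·) := by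
      rw [List.pairwise_iff_get]
      intro i j hij
      have hne : l.get i ≠ l.get j := by
        intro h
        exact absurd (List.Nodup.get_inj_iff h1 |>.mp h) (by omega)
      rcases lt_or_gt_of_ne hne with hlt | hgt
      · exfalso
        apply h4
        refine ⟨[l.get i, l.get j], ?_, rfl, by simpa using hlt⟩
        have : List.map (fun i : Fin l.length => l[i]) [i, j] <+ l :=
          List.map_getElem_sublist (by simp; exact hij)
        simpa using this
      · exact hgt
    have hperm : l ~ (List.range m).reverse := by
      obtain ⟨h1', h2', -⟩ := mem_GLF.mp hw
      apply List.perm_of_nodup_nodup_toFinset_eq h1 h1'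
      rw [h2, h2']
    apply List.Perm.eq_of_pairwise (fun a b _ _ h1 h2 => absurd (lt_trans h1 h2) (lt_irrefl _)) hpw ?_ hperm
    rw [List.pairwise_reverse]
    simpa using List.pairwise_lt_range (n := m)
  · rintro rfl
    exact hw

lemma GLF_singleton (k : ℕ) (hk : 2 ≤ k) : (GLF k (Finset.range 1)).card = 1 := by
  apply Finset.card_eq_one.mpr
  refine ⟨[0], ?_⟩
  ext l
  simp only [Finset.mem_singleton]
  constructor
  · intro hl
    obtain ⟨h1, h2, -⟩ := mem_GLF.mp hl
    have hlen : l.length = 1 := by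
      rw [← List.toFinset_card_of_nodup h1, h2, Finset.card_range]
    rcases l with _ | ⟨x, (_ | _)⟩
    · simp at hlen
    · have : x ∈ Finset.range 1 := by rw [← h2]; simp
      simp at this
      simp [this]
    · simp at hlen
  · rintro rfl
    rw [mem_GLF]
    refine ⟨by simp, by ext x; simp, ?_, ?_⟩
    · rintro ⟨a, b, c, d, hs, -⟩
      have := hs.length_le
      simp at this
    · rintro ⟨s, hs, hlen, -⟩
      have := hs.length_le
      simp at this
      omega


lemma sublist_ofFn_iff {m n : ℕ} {g : Fin m → ℕ} {s : List ℕ} (hlen : s.length = n) :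
    s <+ List.ofFn g ↔
      ∃ f : Fin n → Fin m, StrictMono f ∧ ∀ i : Fin n, s.get (Fin.cast hlen.symm i) = g (f i) := by
  rw [List.sublist_iff_exists_fin_orderEmbedding_get_eq]
  constructor
  · rintro ⟨F, hF⟩
    refine ⟨fun i => Fin.cast (List.length_ofFn (f := g)) (F (Fin.cast hlen.symm i)), ?_, ?_⟩
    · intro i j hij
      exact F.strictMono hij
    · intro i
      rw [hF (Fin.cast hlen.symm i), List.get_ofFn]
  · rintro ⟨f, hf, he⟩
    refine ⟨OrderEmbedding.ofStrictMono
      (fun ix => Fin.cast (List.length_ofFn (f := g)).symm (f (Fin.cast hlen ix))) ?_, ?_⟩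
    · intro i j hij
      exact hf hij
    · intro ix
      rw [List.get_ofFn]
      exact he (Fin.cast hlen ix)

lemma cond_of_forward {m k : ℕ} (π : Equiv.Perm (Fin m)) (σ : Equiv.Perm (Fin k))
    (f : Fin k → Fin m)
    (h : ∀ x y : Fin k, σ x < σ y → π (f x) < π (f y)) :
    ∀ x y : Fin k, π (f x) < π (f y) ↔ σ x < σ y := by
  intro x y
  constructor
  · intro hxy
    rcases lt_trichotomy (σ x) (σ y) with h' | h' | h'
    · exact h'
    · have : x = y := σ.injective h'
      subst this
      exact absurd hxy (lt_irrefl _)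
    · exact absurd (h y x h') (lt_asymm hxy)
  · exact h x y

lemma bad4_iff {m : ℕ} (π : Equiv.Perm (Fin m)) :
    Bad4 (List.ofFn (fun i => (π i : ℕ))) ↔ (PContains p1243 π ∨ PContains p2143 π) := by
  constructor
  · rintro ⟨a, b, c, d, hs, h1, h2, h3⟩
    obtain ⟨f, hf, he⟩ := (sublist_ofFn_iff (s := [a,b,c,d]) (n := 4) rfl).mp hs
    have ha : a = (π (f 0) : ℕ) := he 0
    have hb : b = (π (f 1) : ℕ) := he 1
    have hc : c = (π (f 2) : ℕ) := he 2
    have hd : d = (π (f 3) : ℕ) := he 3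
    have hne : (π (f 0) : ℕ) ≠ (π (f 1) : ℕ) := by
      intro h
      have h01 : f 0 ≠ f 1 := ne_of_lt (hf (by decide))
      exact h01 (π.injective (Fin.val_injective h))
    have F03 : π (f 0) < π (f 3) := by rw [Fin.lt_def, ← ha, ← hd]; exact h1
    have F13 : π (f 1) < π (f 3) := by rw [Fin.lt_def, ← hb, ← hd]; exact h2
    have F32 : π (f 3) < π (f 2) := by rw [Fin.lt_def, ← hd, ← hc]; exact h3
    have F02 : π (f 0) < π (f 2) := lt_trans F03 F32
    have F12 : π (f 1) < π (f 2) := lt_trans F13 F32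
    rcases lt_or_gt_of_ne hne with hab | hba
    · left
      have F01 : π (f 0) < π (f 1) := by rw [Fin.lt_def]; rw [← ha, ← hb] at hab ⊢; exact hab
      refine ⟨f, hf, cond_of_forward π p1243 f ?_⟩
      intro x y h
      fin_cases x <;> fin_cases y <;>
        first
          | exact absurd h (by decide)
          | exact F01 | exact F02 | exact F03 | exact F12 | exact F13 | exact F32
    · right
      have F10 : π (f 1) < π (f 0) := by rw [Fin.lt_def]; rw [← ha, ← hb] at hba ⊢; exact hba
      have F12' : π (f 1) < π (f 2) := F12
      refine ⟨f, hf, cond_of_forward π p2143 f ?_⟩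
      intro x y h
      fin_cases x <;> fin_cases y <;>
        first
          | exact absurd h (by decide)
          | exact F10 | exact F02 | exact F03 | exact F12 | exact F13 | exact F32
  · intro h
    have key : ∀ f : Fin 4 → Fin m, StrictMono f →
        π (f 0) < π (f 3) → π (f 1) < π (f 3) → π (f 3) < π (f 2) →
        Bad4 (List.ofFn (fun i => (π i : ℕ))) := by
      intro f hf q1 q2 q3
      refine ⟨(π (f 0) : ℕ), (π (f 1) : ℕ), (π (f 2) : ℕ), (π (f 3) : ℕ), ?_,
        Fin.lt_def.mp q1, Fin.lt_def.mp q2, Fin.lt_def.mp q3⟩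
      exact (sublist_ofFn_iff
        (s := [(π (f 0) : ℕ), (π (f 1) : ℕ), (π (f 2) : ℕ), (π (f 3) : ℕ)]) (n := 4) rfl).mpr
        ⟨f, hf, fun i => by fin_cases i <;> rfl⟩
    rcases h with ⟨f, hf, hc⟩ | ⟨f, hf, hc⟩
    · exact key f hf ((hc 0 3).mpr (by decide)) ((hc 1 3).mpr (by decide))
        ((hc 3 2).mpr (by decide))
    · exact key f hf ((hc 0 3).mpr (by decide)) ((hc 1 3).mpr (by decide))
        ((hc 3 2).mpr (by decide))

lemma incK_iff {m k : ℕ} (π : Equiv.Perm (Fin m)) :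
    IncK k (List.ofFn (fun i => (π i : ℕ))) ↔ PContains (Equiv.refl (Fin k)) π := by
  constructor
  · rintro ⟨s, hs, hlen, hpw⟩
    obtain ⟨f, hf, he⟩ := (sublist_ofFn_iff hlen).mp hs
    refine ⟨f, hf, ?_⟩
    intro x y
    simp only [Equiv.refl_apply]
    constructor
    · intro hxy
      by_contra hcon
      push_neg at hcon
      rcases eq_or_lt_of_le hcon with rfl | hyx
      · exact lt_irrefl _ hxy
      · have := List.pairwise_iff_get.mp hpw (Fin.cast hlen.symm y) (Fin.cast hlen.symm x)
          hyx
        rw [he x, he y] at this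
        have h2 : (π (f y) : ℕ) < (π (f x) : ℕ) := this
        rw [Fin.lt_def] at hxy
        omega
    · intro hxy
      have := List.pairwise_iff_get.mp hpw (Fin.cast hlen.symm x) (Fin.cast hlen.symm y)
        hxy
      rw [he x, he y] at this
      rw [Fin.lt_def]
      exact this
  · rintro ⟨f, hf, hc⟩
    refine ⟨List.ofFn (fun i : Fin k => (π (f i) : ℕ)), ?_, by simp, ?_⟩
    · apply (sublist_ofFn_iff List.length_ofFn).mpr
      refine ⟨f, hf, ?_⟩
      intro i
      rw [List.get_ofFn]
      rfl
    · rw [List.pairwise_ofFn]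
      intro i j hij
      rw [← Fin.lt_def]
      exact (hc i j).mpr (by simpa using hij)


lemma perm_card (k m : ℕ) :
    Nat.card {π : Equiv.Perm (Fin m) // AvoidsBoth π ∧ PAvoids (Equiv.refl (Fin k)) π}
      = (GLF k (Finset.range m)).card := by
  rw [← card_GLF_eq]
  have hprop : ∀ π : Equiv.Perm (Fin m), (AvoidsBoth π ∧ PAvoids (Equiv.refl (Fin k)) π) →
      (List.ofFn (fun i => (π i : ℕ))).Nodup ∧
      (List.ofFn (fun i => (π i : ℕ))).toFinset = Finset.range m ∧
      GoodL k (List.ofFn (fun i => (π i : ℕ))) := by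
    intro π hπ
    refine ⟨?_, ?_, ?_, ?_⟩
    · rw [List.nodup_ofFn]
      exact fun i j h => π.injective (Fin.val_injective h)
    · ext x
      simp only [List.mem_toFinset, List.mem_ofFn, Set.mem_range, Finset.mem_range]
      constructor
      · rintro ⟨i, rfl⟩
        exact (π i).isLt
      · intro hx
        exact ⟨π.symm ⟨x, hx⟩, by simp⟩
    · intro hb
      rcases (bad4_iff π).mp hb with h | h
      · exact hπ.1.1 h
      · exact hπ.1.2 h
    · intro hi
      exact hπ.2 ((incK_iff π).mp hi)
  apply Nat.card_eq_of_bijective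
    (fun p => (⟨List.ofFn (fun i => ((p.1 : Equiv.Perm (Fin m)) i : ℕ)), hprop p.1 p.2⟩ :
      {l : List ℕ // l.Nodup ∧ l.toFinset = Finset.range m ∧ GoodL k l}))
  constructor
  · rintro ⟨π, hπ⟩ ⟨π', hπ'⟩ h
    simp only [Subtype.mk.injEq] at h
    have : (fun i => (π i : ℕ)) = (fun i => (π' i : ℕ)) := List.ofFn_injective h
    refine Subtype.ext (Equiv.ext fun i => ?_)
    exact Fin.val_injective (congrFun this i)
  · rintro ⟨l, h1, h2, h3⟩
    have hlen : l.length = m := by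
      rw [← List.toFinset_card_of_nodup h1, h2, Finset.card_range]
    have hget : ∀ i : Fin m, l.get (Fin.cast hlen.symm i) < m := by
      intro i
      have : l.get (Fin.cast hlen.symm i) ∈ l := l.get_mem (Fin.cast hlen.symm i)
      rw [← List.mem_toFinset, h2, Finset.mem_range] at this
      exact this
    set e : Fin m → Fin m := fun i => ⟨l.get (Fin.cast hlen.symm i), hget i⟩ with hedef
    have einj : Function.Injective e := by
      intro i j h
      simp only [hedef, Fin.mk.injEq] at h
      have := (List.Nodup.get_inj_iff h1).mp h
      have h2 := congrArg Fin.val this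
      simpa [Fin.ext_iff] using h2
    set π : Equiv.Perm (Fin m) := Equiv.ofBijective e (Finite.injective_iff_bijective.mp einj)
      with hπdef
    have hπe : ∀ i, π i = e i := fun i => rfl
    have hl : List.ofFn (fun i => (π i : ℕ)) = l := by
      apply List.ext_get (by simp [hlen])
      intro n hn1 hn2
      rw [List.get_ofFn]
      simp only [hπe, hedef]
      rfl
    have hcond : AvoidsBoth π ∧ PAvoids (Equiv.refl (Fin k)) π := by
      refine ⟨⟨?_, ?_⟩, ?_⟩
      · intro h
        apply h3.1
        rw [← hl]
        exact (bad4_iff π).mpr (Or.inl h)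
      · intro h
        apply h3.1
        rw [← hl]
        exact (bad4_iff π).mpr (Or.inr h)
      · intro h
        apply h3.2
        rw [← hl]
        exact (incK_iff π).mpr h
    exact ⟨⟨π, hcond⟩, Subtype.ext hl⟩


instance : Fintype Step :=
  ⟨⟨[Step.N, Step.E, Step.D], by decide⟩, fun x => by cases x <;> decide⟩

lemma step_length (w : List Step) :
    w.length = w.count Step.N + w.count Step.E + w.count Step.D := by
  induction w with
  | nil => rfl
  | cons x w ih =>
    cases x <;> simp [List.count_cons, ih] <;> omega

lemma prefix_append_cases : ∀ (u : List Step) (p w : List Step), p <+: u ++ w →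
    p <+: u ∨ ∃ q, p = u ++ q ∧ q <+: w := by
  intro u
  induction u with
  | nil => intro p w h; exact Or.inr ⟨p, rfl, h⟩
  | cons x u' ih =>
    intro p w h
    rcases p with _ | ⟨y, p'⟩
    · exact Or.inl List.nil_prefix
    · rw [List.cons_append, List.cons_prefix_cons] at h
      obtain ⟨rfl, h'⟩ := h
      rcases ih p' w h' with h2 | ⟨q, rfl, hq⟩
      · exact Or.inl (List.cons_prefix_cons.mpr ⟨rfl, h2⟩)
      · exact Or.inr ⟨q, rfl, hq⟩

/-- the path predicate from the theorem -/
def PathP (h n : ℕ) (w : List Step) : Prop :=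
  IsSchroder w ∧ w.count Step.E + w.count Step.D = n ∧
    ∀ p : List Step, p <+: w → p.count Step.N ≤ p.count Step.E + h

lemma finite_path (h n : ℕ) : {w : List Step | PathP h n w}.Finite := by
  apply Set.Finite.subset (List.finite_length_le Step (2 * n))
  rintro w ⟨⟨h1, -⟩, h2, -⟩
  simp only [Set.mem_setOf_eq]
  rw [step_length w]
  omega

noncomputable def PF (h n : ℕ) : Finset (List Step) := (finite_path h n).toFinset

lemma mem_PF {h n : ℕ} {w : List Step} : w ∈ PF h n ↔ PathP h n w := by
  simp [PF]

lemma card_PF_eq (h n : ℕ) :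
    Nat.card {w : List Step // IsSchroder w ∧ w.count Step.E + w.count Step.D = n ∧
      ∀ p : List Step, p <+: w → p.count Step.N ≤ p.count Step.E + h} = (PF h n).card := by
  have e : Nat.card {w : List Step // IsSchroder w ∧ w.count Step.E + w.count Step.D = n ∧
      ∀ p : List Step, p <+: w → p.count Step.N ≤ p.count Step.E + h} =
      Nat.card ↥{w : List Step | PathP h n w} := rfl
  rw [e, Nat.card_coe_set_eq, Set.ncard_eq_toFinset_card _ (finite_path h n)]
  rfl

def srSplit : ℕ → List Step → List Step × List Step
  | _, [] => ([], [])
  | 0, (Step.E :: w) => ([], w)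
  | (d+1), (Step.E :: w) => (Step.E :: (srSplit d w).1, (srSplit d w).2)
  | d, (Step.N :: w) => (Step.N :: (srSplit (d+1) w).1, (srSplit (d+1) w).2)
  | d, (Step.D :: w) => (Step.D :: (srSplit d w).1, (srSplit d w).2)

/-- reconstruction: splitting a composite word gives back the pieces -/
lemma srSplit_app : ∀ (u : List Step) (d : ℕ) (v : List Step),
    (∀ q : List Step, q <+: u → q.count Step.E ≤ q.count Step.N + d) →
    u.count Step.E = u.count Step.N + d →
    srSplit d (u ++ Step.E :: v) = (u, v) := by
  intro u
  induction u with
  | nil =>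
    intro d v hpre hcnt
    simp at hcnt
    subst hcnt
    rfl
  | cons x u' ih =>
    intro d v hpre hcnt
    cases x
    · -- N
      have h1 : ∀ q : List Step, q <+: u' → q.count Step.E ≤ q.count Step.N + (d+1) := by
        intro q hq
        have := hpre (Step.N :: q) (List.cons_prefix_cons.mpr ⟨rfl, hq⟩)
        simp [List.count_cons] at this
        omega
      have h2 : u'.count Step.E = u'.count Step.N + (d+1) := by
        simp [List.count_cons] at hcnt
        omega
      have := ih (d+1) v h1 h2
      simp only [List.cons_append, srSplit, List.append_eq, this]
    · -- E : need d ≥ 1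
      have hd : 1 ≤ d := by
        have := hpre [Step.E] (List.cons_prefix_cons.mpr ⟨rfl, List.nil_prefix⟩)
        simpa using this
      obtain ⟨d', rfl⟩ : ∃ d', d = d' + 1 := ⟨d - 1, by omega⟩
      have h1 : ∀ q : List Step, q <+: u' → q.count Step.E ≤ q.count Step.N + d' := by
        intro q hq
        have := hpre (Step.E :: q) (List.cons_prefix_cons.mpr ⟨rfl, hq⟩)
        simp [List.count_cons] at this
        omega
      have h2 : u'.count Step.E = u'.count Step.N + d' := by
        simp [List.count_cons] at hcnt
        omega
      have := ih d' v h1 h2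
      simp only [List.cons_append, srSplit, List.append_eq, this]
    · -- D
      have h1 : ∀ q : List Step, q <+: u' → q.count Step.E ≤ q.count Step.N + d := by
        intro q hq
        have := hpre (Step.D :: q) (List.cons_prefix_cons.mpr ⟨rfl, hq⟩)
        simp [List.count_cons] at this
        omega
      have h2 : u'.count Step.E = u'.count Step.N + d := by
        simp [List.count_cons] at hcnt
        omega
      have := ih d v h1 h2
      simp only [List.cons_append, srSplit, List.append_eq, this]

/-- existence: a word with positive excess splits -/
lemma srSplit_spec : ∀ (w : List Step) (d : ℕ),
    w.count Step.E = w.count Step.N + d + 1 →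
    (∀ q : List Step, q <+: w → q.count Step.E ≤ q.count Step.N + d + 1) →
    ∃ u v, w = u ++ Step.E :: v ∧ srSplit d w = (u, v) ∧
      u.count Step.E = u.count Step.N + d ∧
      (∀ q : List Step, q <+: u → q.count Step.E ≤ q.count Step.N + d) := by
  intro w
  induction w with
  | nil => intro d h1 _; simp at h1
  | cons x w' ih =>
    intro d h1 hpre
    cases x
    · -- N
      have e1 : w'.count Step.E = w'.count Step.N + (d+1) + 1 := by
        simp [List.count_cons] at h1; omega
      have e2 : ∀ q : List Step, q <+: w' → q.count Step.E ≤ q.count Step.N + (d+1) + 1 := by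
        intro q hq
        have := hpre (Step.N :: q) (List.cons_prefix_cons.mpr ⟨rfl, hq⟩)
        simp [List.count_cons] at this
        omega
      obtain ⟨u, v, rfl, hsp, hc, hp⟩ := ih (d+1) e1 e2
      refine ⟨Step.N :: u, v, rfl, ?_, ?_, ?_⟩
      · simp only [srSplit, List.append_eq, hsp]
      · simp [List.count_cons]; omega
      · intro q hq
        rcases List.prefix_cons_iff.mp hq with rfl | ⟨t, rfl, ht⟩
        · simp
        · have := hp t ht
          simp [List.count_cons]
          omega
    · -- E
      rcases Nat.eq_zero_or_pos d with rfl | hd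
      · refine ⟨[], w', rfl, rfl, by simp, ?_⟩
        intro q hq
        have hq0 : q = [] := List.sublist_nil.mp hq.sublist
        subst hq0
        simp
      · obtain ⟨d', rfl⟩ : ∃ d', d = d' + 1 := ⟨d - 1, by omega⟩
        have e1 : w'.count Step.E = w'.count Step.N + d' + 1 := by
          simp [List.count_cons] at h1; omega
        have e2 : ∀ q : List Step, q <+: w' → q.count Step.E ≤ q.count Step.N + d' + 1 := by
          intro q hq
          have := hpre (Step.E :: q) (List.cons_prefix_cons.mpr ⟨rfl, hq⟩)
          simp [List.count_cons] at this
          omega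
        obtain ⟨u, v, rfl, hsp, hc, hp⟩ := ih d' e1 e2
        refine ⟨Step.E :: u, v, rfl, ?_, ?_, ?_⟩
        · simp only [srSplit, List.append_eq, hsp]
        · simp [List.count_cons]; omega
        · intro q hq
          rcases List.prefix_cons_iff.mp hq with rfl | ⟨t, rfl, ht⟩
          · simp
          · have := hp t ht
            simp [List.count_cons]
            omega
    · -- D
      have e1 : w'.count Step.E = w'.count Step.N + d + 1 := by
        simp [List.count_cons] at h1; omega
      have e2 : ∀ q : List Step, q <+: w' → q.count Step.E ≤ q.count Step.N + d + 1 := by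
        intro q hq
        have := hpre (Step.D :: q) (List.cons_prefix_cons.mpr ⟨rfl, hq⟩)
        simp [List.count_cons] at this
        omega
      obtain ⟨u, v, rfl, hsp, hc, hp⟩ := ih d e1 e2
      refine ⟨Step.D :: u, v, rfl, ?_, ?_, ?_⟩
      · simp only [srSplit, List.append_eq, hsp]
      · simp [List.count_cons]; omega
      · intro q hq
        rcases List.prefix_cons_iff.mp hq with rfl | ⟨t, rfl, ht⟩
        · simp
        · have := hp t ht
          simp [List.count_cons]
          omega


def phiP : List Step → ℕ
  | Step.N :: w' => (srSplit 0 w').1.count Step.E + (srSplit 0 w').1.count Step.D + 1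
  | _ => 0

lemma no_E_head {h n : ℕ} {w : List Step} (hw : PathP h n w) :
    ∀ w', w ≠ Step.E :: w' := by
  rintro w' rfl
  have := hw.1.2 [Step.E] (List.cons_prefix_cons.mpr ⟨rfl, List.nil_prefix⟩)
  simp at this

lemma path_fiber0 (h n : ℕ) :
    (Finset.filter (fun w => phiP w = 0) (PF h (n+1))).card = (PF h n).card := by
  apply Finset.card_nbij' (fun w => w.tail) (fun w => Step.D :: w)
  · intro w hw
    obtain ⟨hmem, hfib⟩ := Finset.mem_filter.mp hw
    rw [mem_PF] at hmem
    obtain ⟨⟨hbal, hlow⟩, hcnt, hup⟩ := hmem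
    rcases w with _ | ⟨x, w'⟩
    · simp at hcnt
    cases x
    · simp [phiP] at hfib
    · exact absurd rfl (no_E_head ⟨⟨hbal, hlow⟩, hcnt, hup⟩ w')
    · rw [Finset.mem_coe, mem_PF]
      refine ⟨⟨?_, ?_⟩, ?_, ?_⟩
      · show w'.count Step.N = w'.count Step.E
        simp [List.count_cons] at hbal; omega
      · intro q hq
        have := hlow (Step.D :: q) (List.cons_prefix_cons.mpr ⟨rfl, hq⟩)
        simpa [List.count_cons] using this
      · show w'.count Step.E + w'.count Step.D = n
        simp [List.count_cons] at hcnt; omega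
      · intro q hq
        have := hup (Step.D :: q) (List.cons_prefix_cons.mpr ⟨rfl, hq⟩)
        simpa [List.count_cons] using this
  · intro w hw
    rw [Finset.mem_coe, mem_PF] at hw
    obtain ⟨⟨hbal, hlow⟩, hcnt, hup⟩ := hw
    rw [Finset.mem_coe, Finset.mem_filter, mem_PF]
    refine ⟨⟨⟨?_, ?_⟩, ?_, ?_⟩, rfl⟩
    · simpa [List.count_cons] using hbal
    · intro q hq
      rcases List.prefix_cons_iff.mp hq with rfl | ⟨t, rfl, ht⟩
      · exact Nat.zero_le _
      · have := hlow t ht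
        simpa [List.count_cons] using this
    · simp [List.count_cons]; omega
    · intro q hq
      rcases List.prefix_cons_iff.mp hq with rfl | ⟨t, rfl, ht⟩
      · exact Nat.zero_le _
      · have := hup t ht
        simpa [List.count_cons] using this
  · intro w hw
    obtain ⟨hmem, hfib⟩ := Finset.mem_filter.mp hw
    rw [mem_PF] at hmem
    rcases w with _ | ⟨x, w'⟩
    · exact absurd hmem.2.1 (by simp)
    cases x
    · simp [phiP] at hfib
    · exact absurd rfl (no_E_head hmem w')
    · rfl
  · intro w hw
    rfl

lemma path_fwd (h n i : ℕ) {w : List Step}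
    (hmem : w ∈ PF (h+1) (n+1)) (hfib : phiP w = i + 1) :
    ((srSplit 0 w.tail).1, (srSplit 0 w.tail).2) ∈ (PF h i) ×ˢ (PF (h+1) (n-i)) ∧
      i ≤ n ∧
      Step.N :: (srSplit 0 w.tail).1 ++ Step.E :: (srSplit 0 w.tail).2 = w := by
  rw [mem_PF] at hmem
  obtain ⟨⟨hbal, hlow⟩, hcnt, hup⟩ := hmem
  rcases w with _ | ⟨x, w'⟩
  · simp at hcnt
  cases x
  case E => exact absurd rfl (no_E_head ⟨⟨hbal, hlow⟩, hcnt, hup⟩ w')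
  case D => simp [phiP] at hfib
  case N =>
  have he1 : w'.count Step.E = w'.count Step.N + 0 + 1 := by
    simp [List.count_cons] at hbal; omega
  have he2 : ∀ q : List Step, q <+: w' → q.count Step.E ≤ q.count Step.N + 0 + 1 := by
    intro q hq
    have := hlow (Step.N :: q) (List.cons_prefix_cons.mpr ⟨rfl, hq⟩)
    simp [List.count_cons] at this
    omega
  obtain ⟨u, v, hw', hsp, hc, hp⟩ := srSplit_spec w' 0 he1 he2
  have htl : (Step.N :: w').tail = w' := rfl
  rw [htl, hsp]
  simp only []
  -- counts of w in terms of u, v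
  have hbal' : (Step.N :: w').count Step.N = (Step.N :: w').count Step.E := hbal
  rw [hw'] at hbal' hcnt hup hlow
  have hNu : u.count Step.N = u.count Step.E := by omega
  have hsz : u.count Step.E + u.count Step.D = i := by
    have h2 : phiP (Step.N :: w') = u.count Step.E + u.count Step.D + 1 := by
      simp only [phiP, hsp]
    omega
  have hvbal : v.count Step.N = v.count Step.E := by
    simp [List.count_cons, List.count_append] at hbal'
    omega
  have hvsz : v.count Step.E + v.count Step.D = n - i ∧ i ≤ n := by
    simp [List.count_cons, List.count_append] at hcnt
    omega
  refine ⟨?_, hvsz.2, by rw [hw']; exact List.cons_append⟩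
  rw [Finset.mem_product, mem_PF, mem_PF]
  refine ⟨⟨⟨hNu, fun q hq => by have := hp q hq; omega⟩, hsz, ?_⟩,
          ⟨⟨hvbal, ?_⟩, hvsz.1, ?_⟩⟩
  · -- upper bound inside u
    intro q hq
    have hpre : Step.N :: q <+: Step.N :: (u ++ Step.E :: v) :=
      List.cons_prefix_cons.mpr ⟨rfl, hq.trans (u.prefix_append (Step.E :: v))⟩
    have := hup (Step.N :: q) hpre
    simp [List.count_cons] at this
    omega
  · -- lower bound inside v
    intro q hq
    have hpre : Step.N :: (u ++ Step.E :: q) <+: Step.N :: (u ++ Step.E :: v) :=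
      List.cons_prefix_cons.mpr ⟨rfl,
        (List.prefix_append_right_inj u).mpr (List.cons_prefix_cons.mpr ⟨rfl, hq⟩)⟩
    have := hlow _ hpre
    simp [List.count_cons, List.count_append] at this
    omega
  · -- upper bound inside v
    intro q hq
    have hpre : Step.N :: (u ++ Step.E :: q) <+: Step.N :: (u ++ Step.E :: v) :=
      List.cons_prefix_cons.mpr ⟨rfl,
        (List.prefix_append_right_inj u).mpr (List.cons_prefix_cons.mpr ⟨rfl, hq⟩)⟩
    have := hup _ hpre
    simp [List.count_cons, List.count_append] at this
    omega

lemma path_bwd (h n i : ℕ) (hi : i ≤ n) {u v : List Step}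
    (hu : u ∈ PF h i) (hv : v ∈ PF (h+1) (n-i)) :
    (Step.N :: u ++ Step.E :: v) ∈
        Finset.filter (fun w => phiP w = i + 1) (PF (h+1) (n+1)) ∧
      srSplit 0 (Step.N :: u ++ Step.E :: v).tail = (u, v) := by
  rw [mem_PF] at hu hv
  obtain ⟨⟨hubal, hulow⟩, hucnt, huup⟩ := hu
  obtain ⟨⟨hvbal, hvlow⟩, hvcnt, hvup⟩ := hv
  have hsplit : srSplit 0 (u ++ Step.E :: v) = (u, v) :=
    srSplit_app u 0 v (fun q hq => by have := hulow q hq; omega) (by omega)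
  have htl : (Step.N :: u ++ Step.E :: v).tail = u ++ Step.E :: v := rfl
  refine ⟨?_, by rw [htl, hsplit]⟩
  rw [Finset.mem_filter, mem_PF]
  refine ⟨⟨⟨?_, ?_⟩, ?_, ?_⟩, ?_⟩
  · simp [List.count_cons, List.count_append]
    omega
  · -- lower prefix bound
    intro p hp
    rcases List.prefix_cons_iff.mp hp with rfl | ⟨p', rfl, hp'⟩
    · exact Nat.zero_le _
    rcases prefix_append_cases u p' (Step.E :: v) hp' with hpu | ⟨q, rfl, hq⟩
    · have := hulow p' hpu
      simp [List.count_cons]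
      omega
    · rcases List.prefix_cons_iff.mp hq with rfl | ⟨q', rfl, hq'⟩
      · simp [List.count_cons, List.count_append]
        omega
      · have := hvlow q' hq'
        simp [List.count_cons, List.count_append]
        omega
  · simp [List.count_cons, List.count_append]
    omega
  · -- upper prefix bound
    intro p hp
    rcases List.prefix_cons_iff.mp hp with rfl | ⟨p', rfl, hp'⟩
    · exact Nat.zero_le _
    rcases prefix_append_cases u p' (Step.E :: v) hp' with hpu | ⟨q, rfl, hq⟩
    · have := huup p' hpu
      simp [List.count_cons]
      omega
    · rcases List.prefix_cons_iff.mp hq with rfl | ⟨q', rfl, hq'⟩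
      · simp [List.count_cons, List.count_append]
        omega
      · have := hvup q' hq'
        simp [List.count_cons, List.count_append]
        omega
  · -- fiber value
    show phiP (Step.N :: (u ++ Step.E :: v)) = i + 1
    simp [phiP, hsplit]
    omega

lemma path_rec (h n : ℕ) :
    (PF (h+1) (n+1)).card = (PF (h+1) n).card +
      ∑ i ∈ Finset.range (n+1), (PF h i).card * (PF (h+1) (n-i)).card := by
  have hfib : ∀ w ∈ PF (h+1) (n+1), phiP w ∈ Finset.range (n+2) := by
    intro w hw
    rcases hphi : phiP w with _ | i
    · simp
    · have := path_fwd h n i hw hphi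
      simp only [Finset.mem_range]
      omega
  rw [Finset.card_eq_sum_card_fiberwise hfib, Finset.sum_range_succ', add_comm]
  congr 1
  · exact path_fiber0 (h+1) n
  · apply Finset.sum_congr rfl
    intro i hi
    have him : i ≤ n := by simpa [Nat.lt_succ_iff] using Finset.mem_range.mp hi
    rw [← Finset.card_product]
    apply Finset.card_nbij'
      (fun w => ((srSplit 0 w.tail).1, (srSplit 0 w.tail).2))
      (fun p => Step.N :: p.1 ++ Step.E :: p.2)
    · intro w hw
      obtain ⟨h1, h2⟩ := Finset.mem_filter.mp hw
      exact (path_fwd h n i h1 h2).1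
    · intro p hp
      obtain ⟨h1, h2⟩ := Finset.mem_product.mp hp
      exact (path_bwd h n i him h1 h2).1
    · intro w hw
      obtain ⟨h1, h2⟩ := Finset.mem_filter.mp hw
      exact (path_fwd h n i h1 h2).2.2
    · intro p hp
      obtain ⟨h1, h2⟩ := Finset.mem_product.mp hp
      have := (path_bwd h n i him h1 h2).2
      simp only [this]

lemma PF_zero (h : ℕ) : (PF h 0).card = 1 := by
  apply Finset.card_eq_one.mpr
  refine ⟨[], ?_⟩
  ext w
  simp only [Finset.mem_singleton, mem_PF]
  constructor
  · rintro ⟨⟨hbal, -⟩, hcnt, -⟩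
    have := step_length w
    have hlen : w.length = 0 := by omega
    exact List.length_eq_zero_iff.mp hlen
  · rintro rfl
    refine ⟨⟨rfl, ?_⟩, rfl, ?_⟩ <;>
    · intro q hq
      have : q = [] := List.sublist_nil.mp hq.sublist
      subst this
      simp

lemma all_D {w : List Step} (hbal : ∀ q : List Step, q <+: w →
    q.count Step.N = q.count Step.E) : ∀ x ∈ w, x = Step.D := by
  induction w with
  | nil => simp
  | cons x w' ih =>
    have hx : x = Step.D := by
      have := hbal [x] (List.cons_prefix_cons.mpr ⟨rfl, List.nil_prefix⟩)
      cases x <;> simp at this <;> rfl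
    subst hx
    intro y hy
    rcases List.mem_cons.mp hy with rfl | hy'
    · rfl
    · refine ih ?_ y hy'
      intro q hq
      have := hbal (Step.D :: q) (List.cons_prefix_cons.mpr ⟨rfl, hq⟩)
      simpa [List.count_cons] using this

lemma PF_height0 (n : ℕ) : (PF 0 n).card = 1 := by
  apply Finset.card_eq_one.mpr
  refine ⟨List.replicate n Step.D, ?_⟩
  ext w
  simp only [Finset.mem_singleton, mem_PF]
  constructor
  · rintro ⟨⟨hbal, hlow⟩, hcnt, hup⟩
    have hbal' : ∀ q : List Step, q <+: w → q.count Step.N = q.count Step.E := by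
      intro q hq
      have h1 := hlow q hq
      have h2 := hup q hq
      omega
    have hD := all_D hbal'
    have hE : w.count Step.E = 0 := by
      rw [List.count_eq_zero]
      intro h
      exact absurd (hD _ h) (by simp)
    have hlen : w.length = n := by
      have hN : w.count Step.N = 0 := by rw [hbal, hE]
      have := step_length w
      omega
    rw [List.eq_replicate_iff]
    exact ⟨hlen, hD⟩
  · rintro rfl
    have hq : ∀ q : List Step, q <+: List.replicate n Step.D →
        q.count Step.N = 0 ∧ q.count Step.E = 0 := by
      intro q hq
      constructor <;>
      · rw [List.count_eq_zero]
        intro h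
        have := List.eq_of_mem_replicate (hq.sublist.subset h)
        simp at this
    refine ⟨⟨?_, ?_⟩, ?_, ?_⟩
    · obtain ⟨h1, h2⟩ := hq _ (List.prefix_refl _)
      rw [h1, h2]
    · intro q hqq
      obtain ⟨h1, h2⟩ := hq q hqq
      omega
    · obtain ⟨h1, h2⟩ := hq _ (List.prefix_refl _)
      have := step_length (List.replicate n Step.D)
      simp at this ⊢
      omega
    · intro q hqq
      obtain ⟨h1, h2⟩ := hq q hqq
      omega


lemma master_count : ∀ (h n : ℕ), (PF h n).card = (GLF (h+2) (Finset.range (n+1))).card := by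
  intro h
  induction h with
  | zero =>
    intro n
    rw [PF_height0, GLF_two]
  | succ h ih =>
    intro n
    induction n using Nat.strong_induction_on with
    | _ n ihn =>
      rcases n with _ | n
      · rw [PF_zero, GLF_singleton (h+3) (by omega)]
      · rw [path_rec h n, GLF_rec (h+1) (n+1)]
        congr 1
        · exact ihn n (by omega)
        · apply Finset.sum_congr rfl
          intro i hi
          have him : i ≤ n := by
            have := Finset.mem_range.mp hi
            omega
          rw [ih i, ihn (n - i) (by omega)]
          have e : n - i + 1 = n + 1 - i := by omega
          rw [e]

end AuxProof

/-- For k ≥ 2 and n ≥ 0, the number of Schröder paths from (0,0) to (n,n)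
staying weakly below the line y − x = k−2 (every prefix has at most k−2 more N's than
E's) equals |S_{n+1}(1243, 2143, 12…k)|, where 12…k is the identity of length k. -/
theorem stmt_6 (k n : ℕ) (hk : 2 ≤ k) :
    Nat.card {w : List Step // IsSchroder w ∧ w.count Step.E + w.count Step.D = n ∧
        ∀ p : List Step, p <+: w → p.count Step.N ≤ p.count Step.E + (k - 2)} =
      Nat.card {π : Equiv.Perm (Fin (n + 1)) //
        AvoidsBoth π ∧ PAvoids (Equiv.refl (Fin k)) π} := by
  obtain ⟨h, rfl⟩ : ∃ h, k = h + 2 := ⟨k - 2, by omega⟩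
  simp only [Nat.add_sub_cancel]
  rw [card_PF_eq h n, perm_card (h+2) (n+1), master_count h n]
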